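/- Let X be an abelian group with automorphism t : X → X such that 1−t is also an automorphism. Let G be the quotient of the free abelian group ℤ⟨X×X⟩ by the subgroup generated by the elements (a,(1−t)a), (a,0), (0,a) for all a ∈ X, and the elements (x,z) − (x,y) − (tx+y, z) + (tx+z, ty+(1−t)z) for all x,y,z ∈ X. Then the assignment (a,b) ↦ a ⊗ b induces a group isomorphism G ≅ (X ⊗_ℤ X)/N, where N is the subgroup of X ⊗_ℤ X generated by all elements x ⊗ y − y ⊗ t x. -/

import Mathlib

open FreeAbelianGroup TensorProduct

private lemma main_aux {X : Type*} [AddCommGroup X] {Q : Type*} [AddCommGroup Q]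
    (t : X ≃+ X) (ht : Function.Bijective fun x : X => x - t x)
    (f : X → X → Q)
    (hA : ∀ a, f a (a - t a) = 0)
    (hB1 : ∀ a, f a 0 = 0)
    (hB2 : ∀ a, f 0 a = 0)
    (hC : ∀ x y w, f x w - f x y - f (t x + y) w + f (t x + w) (t y + (w - t w)) = 0) :
    (∀ b c w, f b (c + w) = f b c + f b w) ∧ (∀ b w, f b w = f w (t b)) := by
  have zStar : ∀ y w, f y w - f w (t y + (w - t w)) = 0 := by
    intro y w
    have h := hC 0 y w
    simp only [map_zero, zero_add] at h
    have k : f y w - f w (t y + (w - t w))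
        = f 0 w - f 0 y - (f 0 w - f 0 y - f y w + f w (t y + (w - t w))) := by abel
    rw [h, hB2, hB2] at k
    simpa using k
  have zE : ∀ x b w, f x w - f x (b + (x - t x)) - f (b + x) w + f b (t x + w) = 0 := by
    intro x b w
    have h := hC x (b + (x - t x)) w
    rw [show t x + (b + (x - t x)) = b + x by abel] at h
    have h2 := zStar b (t x + w)
    rw [show t b + (t x + w - t (t x + w)) = t (b + (x - t x)) + (w - t w) by
      simp only [map_add, map_sub]; abel] at h2
    have k : f x w - f x (b + (x - t x)) - f (b + x) w + f b (t x + w)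
        = (f x w - f x (b + (x - t x)) - f (b + x) w
            + f (t x + w) (t (b + (x - t x)) + (w - t w)))
          + (f b (t x + w) - f (t x + w) (t (b + (x - t x)) + (w - t w))) := by abel
    rw [h, h2] at k
    simpa using k
  have zU : ∀ x b, f x (b + (x - t x)) - f b (t x) = 0 := by
    intro x b
    have h := zE x b 0
    rw [add_zero] at h
    have k : f x (b + (x - t x)) - f b (t x)
        = f x 0 - f (b + x) 0
          - (f x 0 - f x (b + (x - t x)) - f (b + x) 0 + f b (t x)) := by abel
    rw [h, hB1, hB1] at k
    simpa using k
  have zK : ∀ x b w, f b (t x + w) - f b (t x) - f (b + x) w + f x w = 0 := by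
    intro x b w
    have h := zE x b w
    have h2 := zU x b
    have k : f b (t x + w) - f b (t x) - f (b + x) w + f x w
        = (f x w - f x (b + (x - t x)) - f (b + x) w + f b (t x + w))
          + (f x (b + (x - t x)) - f b (t x)) := by abel
    rw [h, h2] at k
    simpa using k
  have zQ : ∀ x b w, f b (t x + w) - f b (t x)
      - f w (t x + t b + (w - t w)) + f w (t x + (w - t w)) = 0 := by
    intro x b w
    have h := zK x b w
    have h1 := zStar (b + x) w
    rw [show t (b + x) + (w - t w) = t x + t b + (w - t w) by rw [map_add]; abel] at h1
    have h2 := zStar x w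
    have k : f b (t x + w) - f b (t x) - f w (t x + t b + (w - t w)) + f w (t x + (w - t w))
        = (f b (t x + w) - f b (t x) - f (b + x) w + f x w)
          + (f (b + x) w - f w (t x + t b + (w - t w)))
          - (f x w - f w (t x + (w - t w))) := by abel
    rw [h, h1, h2] at k
    simpa using k
  have zR : ∀ w c, f w (c + (w - t w)) - f w c = 0 := by
    intro w c
    obtain ⟨x, rfl⟩ := t.surjective c
    have h := zQ x w w
    rw [show t x + t w + (w - t w) = t x + w by abel] at h
    have k : f w (t x + (w - t w)) - f w (t x)
        = f w (t x + w) - f w (t x) - f w (t x + w) + f w (t x + (w - t w)) := by abel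
    rw [h] at k
    exact k
  have zQ' : ∀ b c w, f b (c + w) - f b c - f w (c + t b) + f w c = 0 := by
    intro b c w
    obtain ⟨x, rfl⟩ := t.surjective c
    have h := zQ x b w
    have h1 := zR w (t x + t b)
    have h2 := zR w (t x)
    have k : f b (t x + w) - f b (t x) - f w (t x + t b) + f w (t x)
        = (f b (t x + w) - f b (t x) - f w (t x + t b + (w - t w)) + f w (t x + (w - t w)))
          + (f w (t x + t b + (w - t w)) - f w (t x + t b))
          - (f w (t x + (w - t w)) - f w (t x)) := by abel
    rw [h, h1, h2] at k
    simpa using k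
  have zW : ∀ b w, f b w - f w (t b) = 0 := by
    intro b w
    have h := zQ' b 0 w
    simp only [zero_add] at h
    have k : f b w - f w (t b)
        = (f b w - f b 0 - f w (t b) + f w 0) + f b 0 - f w 0 := by abel
    rw [h, hB1, hB1] at k
    simpa using k
  set sig : X → X → X → Q := fun b c w => f b (c + w) - f b c - f b w with hsig
  have zM1 : ∀ b c w, sig b c w = sig w c (t b) := by
    intro b c w
    simp only [hsig]
    have h := zQ' b c w
    have h2 := zW b w
    have k : (f b (c + w) - f b c - f b w) - (f w (c + t b) - f w c - f w (t b))
        = (f b (c + w) - f b c - f w (c + t b) + f w c) - (f b w - f w (t b)) := by abel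
    rw [h, h2] at k
    have k' : (f b (c + w) - f b c - f b w) - (f w (c + t b) - f w c - f w (t b)) = 0 := by
      simpa using k
    exact sub_eq_zero.mp k'
  have zM2 : ∀ b c w, sig b c w = sig b w c := by
    intro b c w
    simp only [hsig]
    rw [add_comm w c]
    abel
  have zM3 : ∀ b c u, sig b c u = sig c b u := by
    intro b c u
    obtain ⟨a, rfl⟩ := t.surjective u
    rw [← zM1 a c b, ← zM1 a b c, zM2]
  have zM4 : ∀ b c w, sig b c w = sig (t b) c w := by
    intro b c w
    rw [zM1 b c w, zM2, zM3, zM2]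
  have zM4b : ∀ b c w, sig b c w = sig b (t c) w := by
    intro b c w
    rw [zM3, zM4, zM3]
  have zM5 : ∀ b c, sig b c (b - t b) = 0 := by
    intro b c
    simp only [hsig]
    rw [zR b c, hA b]
    simp
  have zM7 : ∀ w c d, sig w (c + (w - t w)) d = sig w c d := by
    intro w c d
    simp only [hsig]
    rw [show c + (w - t w) + d = c + d + (w - t w) by abel]
    have h1 := zR w (c + d)
    have h2 := zR w c
    have k : (f w (c + d + (w - t w)) - f w (c + (w - t w)) - f w d)
          - (f w (c + d) - f w c - f w d)
        = (f w (c + d + (w - t w)) - f w (c + d)) - (f w (c + (w - t w)) - f w c) := by abel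
    rw [h1, h2] at k
    have k' : (f w (c + d + (w - t w)) - f w (c + (w - t w)) - f w d)
          - (f w (c + d) - f w c - f w d) = 0 := by simpa using k
    exact sub_eq_zero.mp k'
  have zM8 : ∀ b w z, sig b w (z + (w - t w)) = sig b w z := by
    intro b w z
    rw [zM3, zM2, zM7, zM2, zM3]
  have zVan : ∀ b w, sig b (t w) (w - t w) = 0 := by
    intro b w
    rw [← zM4b b w (w - t w), zM3]
    exact zM5 w b
  have zSw : ∀ b w z, sig b (w - t w) z = 0 := by
    intro b w z
    have co : sig b (t w) (w - t w) + sig b w z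
        = sig b (w - t w) z + sig b (t w) ((w - t w) + z) := by
      simp only [hsig]
      rw [show t w + (w - t w) = w by abel,
          show t w + ((w - t w) + z) = w + z by abel]
      abel
    have h1 := zVan b w
    have h2 : sig b (t w) ((w - t w) + z) = sig b w z := by
      rw [add_comm (w - t w) z, ← zM4b b w (z + (w - t w)), zM8]
    rw [h1, h2] at co
    calc sig b (w - t w) z = (sig b (w - t w) z + sig b w z) - sig b w z := by abel
      _ = (0 + sig b w z) - sig b w z := by rw [← co]
      _ = 0 := by abel
  have zSig : ∀ b c z, sig b c z = 0 := by
    intro b c z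
    obtain ⟨w, rfl⟩ := ht.2 c
    exact zSw b w z
  constructor
  · intro b c w
    have h := zSig b c w
    simp only [hsig] at h
    calc f b (c + w) = (f b (c + w) - f b c - f b w) + (f b c + f b w) := by abel
      _ = 0 + (f b c + f b w) := by rw [h]
      _ = f b c + f b w := by abel
  · intro b w
    exact sub_eq_zero.mp (zW b w)

theorem quotient_iso_tensor_quotient
    {X : Type*} [AddCommGroup X] (t : X ≃+ X)
    (ht : Function.Bijective fun x : X => x - t x)
    (Rel : AddSubgroup (FreeAbelianGroup (X × X)))
    (hRel : Rel = AddSubgroup.closure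
      ({z | ∃ a : X, z = of (a, a - t a)} ∪ {z | ∃ a : X, z = of (a, (0 : X))} ∪
        {z | ∃ a : X, z = of ((0 : X), a)} ∪
        {z | ∃ x y w : X, z = of (x, w) - of (x, y) - of (t x + y, w)
          + of (t x + w, t y + (w - t w))}))
    (br : X → X → FreeAbelianGroup (X × X) ⧸ Rel)
    (hbr : ∀ a b : X, br a b = QuotientAddGroup.mk (of (a, b)))
    (N : AddSubgroup (X ⊗[ℤ] X))
    (hN : N = AddSubgroup.closure {z | ∃ x y : X, z = x ⊗ₜ[ℤ] y - y ⊗ₜ[ℤ] t x}) :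
    ∃ e : (FreeAbelianGroup (X × X) ⧸ Rel) ≃+ ((X ⊗[ℤ] X) ⧸ N),
      ∀ a b : X, e (QuotientAddGroup.mk (of (a, b))) = QuotientAddGroup.mk (a ⊗ₜ[ℤ] b) := by
  classical
  set F : X → X → FreeAbelianGroup (X × X) ⧸ Rel :=
    fun a b => QuotientAddGroup.mk (of (a, b)) with hF
  -- basic relations in the quotient
  have hA : ∀ a : X, F a (a - t a) = 0 := by
    intro a
    rw [hF]
    rw [QuotientAddGroup.eq_zero_iff, hRel]
    apply AddSubgroup.subset_closure
    simp only [Set.mem_union, Set.mem_setOf_eq]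
    exact Or.inl (Or.inl (Or.inl ⟨a, rfl⟩))
  have hB1 : ∀ a : X, F a 0 = 0 := by
    intro a
    rw [hF]
    rw [QuotientAddGroup.eq_zero_iff, hRel]
    apply AddSubgroup.subset_closure
    simp only [Set.mem_union, Set.mem_setOf_eq]
    exact Or.inl (Or.inl (Or.inr ⟨a, rfl⟩))
  have hB2 : ∀ a : X, F 0 a = 0 := by
    intro a
    rw [hF]
    rw [QuotientAddGroup.eq_zero_iff, hRel]
    apply AddSubgroup.subset_closure
    simp only [Set.mem_union, Set.mem_setOf_eq]
    exact Or.inl (Or.inr ⟨a, rfl⟩)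
  have hC : ∀ x y w : X,
      F x w - F x y - F (t x + y) w + F (t x + w) (t y + (w - t w)) = 0 := by
    intro x y w
    have hm : of (x, w) - of (x, y) - of (t x + y, w)
        + of (t x + w, t y + (w - t w)) ∈ Rel := by
      rw [hRel]
      apply AddSubgroup.subset_closure
      simp only [Set.mem_union, Set.mem_setOf_eq]
      exact Or.inr ⟨x, y, w, rfl⟩
    have h0 : ((of (x, w) - of (x, y) - of (t x + y, w)
        + of (t x + w, t y + (w - t w)) : FreeAbelianGroup (X × X)) :
          FreeAbelianGroup (X × X) ⧸ Rel) = 0 :=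
      (QuotientAddGroup.eq_zero_iff _).mpr hm
    simp only [QuotientAddGroup.mk_add, QuotientAddGroup.mk_sub] at h0
    exact h0
  obtain ⟨add2, swap⟩ := main_aux t ht F hA hB1 hB2 hC
  have add1 : ∀ a b c : X, F (a + b) c = F a c + F b c := by
    intro a b c
    rw [swap (a + b) c, map_add, add2, ← swap a c, ← swap b c]
  -- forward homomorphism
  set Φ1 : FreeAbelianGroup (X × X) →+ (X ⊗[ℤ] X) ⧸ N :=
    (QuotientAddGroup.mk' N).comp
      (FreeAbelianGroup.lift fun p : X × X => p.1 ⊗ₜ[ℤ] p.2) with hΦ1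
  have hΦ1of : ∀ a b : X, Φ1 (of (a, b)) = QuotientAddGroup.mk (a ⊗ₜ[ℤ] b) := by
    intro a b
    rw [hΦ1]
    simp [FreeAbelianGroup.lift_apply_of]
  have HRel : Rel ≤ Φ1.ker := by
    rw [hRel, AddSubgroup.closure_le]
    rintro z hz
    simp only [Set.mem_union, Set.mem_setOf_eq] at hz
    rw [SetLike.mem_coe, AddMonoidHom.mem_ker]
    obtain (((⟨a, rfl⟩ | ⟨a, rfl⟩) | ⟨a, rfl⟩) | ⟨x, y, w, rfl⟩) := hz
    · rw [hΦ1of]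
      rw [QuotientAddGroup.eq_zero_iff, hN]
      apply AddSubgroup.subset_closure
      exact ⟨a, a, by rw [TensorProduct.tmul_sub]⟩
    · rw [hΦ1of]
      rw [show (a ⊗ₜ[ℤ] (0 : X)) = (0 : X ⊗[ℤ] X) from TensorProduct.tmul_zero _ a]
      simp
    · rw [hΦ1of]
      rw [show ((0 : X) ⊗ₜ[ℤ] a) = (0 : X ⊗[ℤ] X) from TensorProduct.zero_tmul _ a]
      simp
    · rw [map_add, map_sub, map_sub, hΦ1of, hΦ1of, hΦ1of, hΦ1of]
      have h0 : (QuotientAddGroup.mk (x ⊗ₜ[ℤ] w) : (X ⊗[ℤ] X) ⧸ N)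
            - QuotientAddGroup.mk (x ⊗ₜ[ℤ] y)
            - QuotientAddGroup.mk ((t x + y) ⊗ₜ[ℤ] w)
            + QuotientAddGroup.mk ((t x + w) ⊗ₜ[ℤ] (t y + (w - t w)))
          = QuotientAddGroup.mk (x ⊗ₜ[ℤ] w - x ⊗ₜ[ℤ] y - (t x + y) ⊗ₜ[ℤ] w
              + (t x + w) ⊗ₜ[ℤ] (t y + (w - t w))) := by
        simp only [QuotientAddGroup.mk_add, QuotientAddGroup.mk_sub]
      rw [h0, QuotientAddGroup.eq_zero_iff, hN]
      have hcomb : x ⊗ₜ[ℤ] w - x ⊗ₜ[ℤ] y - (t x + y) ⊗ₜ[ℤ] w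
            + (t x + w) ⊗ₜ[ℤ] (t y + (w - t w))
          = (x ⊗ₜ[ℤ] w - w ⊗ₜ[ℤ] t x) - (x ⊗ₜ[ℤ] y - y ⊗ₜ[ℤ] t x)
            - (y ⊗ₜ[ℤ] w - w ⊗ₜ[ℤ] t y) + (w ⊗ₜ[ℤ] w - w ⊗ₜ[ℤ] t w)
            - (y ⊗ₜ[ℤ] (t x) - (t x) ⊗ₜ[ℤ] t y)
            + (w ⊗ₜ[ℤ] (t x) - (t x) ⊗ₜ[ℤ] t w) := by
        simp only [TensorProduct.tmul_add, TensorProduct.tmul_sub,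
          TensorProduct.add_tmul, TensorProduct.sub_tmul]
        abel
      rw [hcomb]
      refine AddSubgroup.add_mem _ (AddSubgroup.sub_mem _ (AddSubgroup.add_mem _
        (AddSubgroup.sub_mem _ (AddSubgroup.sub_mem _ ?_ ?_) ?_) ?_) ?_) ?_
      · exact AddSubgroup.subset_closure ⟨x, w, rfl⟩
      · exact AddSubgroup.subset_closure ⟨x, y, rfl⟩
      · exact AddSubgroup.subset_closure ⟨y, w, rfl⟩
      · exact AddSubgroup.subset_closure ⟨w, w, rfl⟩
      · exact AddSubgroup.subset_closure ⟨y, t x, rfl⟩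
      · exact AddSubgroup.subset_closure ⟨w, t x, rfl⟩
  set Φ : (FreeAbelianGroup (X × X) ⧸ Rel) →+ (X ⊗[ℤ] X) ⧸ N :=
    QuotientAddGroup.lift Rel Φ1 HRel with hΦ
  have hΦmk : ∀ a b : X,
      Φ (QuotientAddGroup.mk (of (a, b))) = QuotientAddGroup.mk (a ⊗ₜ[ℤ] b) := by
    intro a b
    rw [hΦ]
    rw [QuotientAddGroup.lift_mk']
    exact hΦ1of a b
  -- backward homomorphism
  set inner : X → X →+ FreeAbelianGroup (X × X) ⧸ Rel :=
    fun a => AddMonoidHom.mk' (fun b => F a b) (fun b c => add2 a b c) with hinner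
  set outer : X →+ X →+ FreeAbelianGroup (X × X) ⧸ Rel :=
    AddMonoidHom.mk' inner (by
      intro a b
      ext c
      simp only [hinner, AddMonoidHom.mk'_apply, AddMonoidHom.add_apply]
      exact add1 a b c) with houter
  have hbal : ∀ (r : ℤ) (m n : X), outer (r • m) n = outer m (r • n) := by
    intro r m n
    rw [map_zsmul, map_zsmul, AddMonoidHom.smul_apply]
  set Ψ1 : X ⊗[ℤ] X →+ FreeAbelianGroup (X × X) ⧸ Rel :=
    TensorProduct.liftAddHom outer hbal with hΨ1
  have hΨ1tmul : ∀ a b : X, Ψ1 (a ⊗ₜ[ℤ] b) = F a b := by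
    intro a b
    rw [hΨ1, TensorProduct.liftAddHom_tmul]
    rfl
  have HN : N ≤ Ψ1.ker := by
    rw [hN, AddSubgroup.closure_le]
    rintro z ⟨u, v, rfl⟩
    rw [SetLike.mem_coe, AddMonoidHom.mem_ker, map_sub, hΨ1tmul, hΨ1tmul]
    rw [swap u v]
    simp
  set Ψ : (X ⊗[ℤ] X) ⧸ N →+ FreeAbelianGroup (X × X) ⧸ Rel :=
    QuotientAddGroup.lift N Ψ1 HN with hΨ
  have hΨmk : ∀ a b : X,
      Ψ (QuotientAddGroup.mk (a ⊗ₜ[ℤ] b)) = QuotientAddGroup.mk (of (a, b)) := by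
    intro a b
    rw [hΨ, QuotientAddGroup.lift_mk', hΨ1tmul]
  have left_inv : ∀ q, Ψ (Φ q) = q := by
    intro q
    refine QuotientAddGroup.induction_on q ?_
    intro z
    refine FreeAbelianGroup.induction_on z ?_ ?_ ?_ ?_
    · simp
    · rintro ⟨a, b⟩
      rw [hΦmk, hΨmk]
    · rintro ⟨a, b⟩ h
      rw [show ((-of ((a, b)) : FreeAbelianGroup (X × X)) :
          FreeAbelianGroup (X × X) ⧸ Rel) = -QuotientAddGroup.mk (of (a, b)) from
        rfl]
      rw [map_neg, map_neg, h]
    · intro u v hu hv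
      rw [show ((u + v : FreeAbelianGroup (X × X)) :
          FreeAbelianGroup (X × X) ⧸ Rel)
          = QuotientAddGroup.mk u + QuotientAddGroup.mk v from
        rfl]
      rw [map_add, map_add, hu, hv]
  have right_inv : ∀ q, Φ (Ψ q) = q := by
    intro q
    refine QuotientAddGroup.induction_on q ?_
    intro z
    refine TensorProduct.induction_on z ?_ ?_ ?_
    · simp
    · intro a b
      rw [hΨmk, hΦmk]
    · intro u v hu hv
      rw [show ((u + v : X ⊗[ℤ] X) : (X ⊗[ℤ] X) ⧸ N)
          = QuotientAddGroup.mk u + QuotientAddGroup.mk v from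
        rfl]
      rw [map_add, map_add, hu, hv]
  refine ⟨{ toFun := Φ, invFun := Ψ, left_inv := left_inv, right_inv := right_inv,
            map_add' := map_add Φ }, ?_⟩
  intro a b
  exact hΦmk a b
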